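/- Let φ : ℝⁿ → ℝ be differentiable at x₀ with ∇φ(x₀) ≠ 0, and suppose for each unit vector u with ⟨u, ν⟩ > cos θ (where ν = -∇φ(x₀)/|∇φ(x₀)| and θ ∈ (0, π/2) fixed) we have the first-order estimate φ(x₀ + tu) ≤ φ(x₀) - |∇φ(x₀)| t cos θ + o(t). Then there exists δ > 0 such that the cone (x₀ + C_{tan(π/2 - θ)}(ν^⊥)) ∩ B_δ(x₀) is contained in the strict sublevel set {x : φ(x) < φ(x₀)}. Moreover, if φ is C¹ with modulus of continuity of ∇φ controlled uniformly and |∇φ| ≥ b₁ > 0 uniformly, then as δ → 0 one may take θ → π/2, i.e., for every α > 0 there exists δ(α) > 0 such that the cone of opening parameter α works at every such point x₀. -/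

import Mathlib

open scoped RealInnerProductSpace

section Helpers
variable {E : Type*} [NormedAddCommGroup E] [InnerProductSpace ℝ E]

lemma cone_dir {ν w : E} (hν : ‖ν‖ = 1) {α : ℝ} (hα : 0 < α)
    (h : α * ‖w - ⟪w, ν⟫ • ν‖ < ⟪w, ν⟫) :
    0 < ‖w‖ ∧ ‖(‖w‖⁻¹ • w)‖ = 1 ∧
      α / Real.sqrt (1 + α ^ 2) < ⟪‖w‖⁻¹ • w, ν⟫ ∧ w = ‖w‖ • (‖w‖⁻¹ • w) := by
  set s := ⟪w, ν⟫ with hs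
  set p := ‖w - s • ν‖ with hp
  have hp0 : 0 ≤ p := norm_nonneg _
  have hs0 : 0 < s := lt_of_le_of_lt (by positivity) h
  have hws : s ≤ ‖w‖ := by
    calc s ≤ ‖w‖ * ‖ν‖ := real_inner_le_norm w ν
    _ = ‖w‖ := by rw [hν, mul_one]
  have hw0 : 0 < ‖w‖ := lt_of_lt_of_le hs0 hws
  have hpyth : p ^ 2 = ‖w‖ ^ 2 - s ^ 2 := by
    have h3 := @norm_sub_sq_real E _ _ w (s • ν)
    have h1 : ⟪w, s • ν⟫ = s * s := by rw [real_inner_smul_right]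
    have h2 : ‖s • ν‖ ^ 2 = s ^ 2 := by
      rw [norm_smul, hν, mul_one, Real.norm_eq_abs, sq_abs]
    rw [← hp] at h3
    rw [h3, h1, h2]; ring
  have hq : (0:ℝ) < 1 + α ^ 2 := by positivity
  have hsq : Real.sqrt (1 + α ^ 2) ^ 2 = 1 + α ^ 2 := Real.sq_sqrt hq.le
  have hsqpos : 0 < Real.sqrt (1 + α ^ 2) := Real.sqrt_pos.2 hq
  have hkey : ‖w‖ * (α / Real.sqrt (1 + α ^ 2)) < s := by
    rw [mul_div_assoc', div_lt_iff₀ hsqpos]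
    have hap : α * p < s := h
    nlinarith [mul_pos hs0 hsqpos, mul_nonneg (mul_nonneg (norm_nonneg w) hα.le) hp0,
      mul_nonneg hα.le hp0]
  refine ⟨hw0, ?_, ?_, ?_⟩
  · rw [norm_smul, Real.norm_eq_abs, abs_inv, abs_of_pos hw0, inv_mul_cancel₀ hw0.ne']
  · rw [real_inner_smul_left, ← hs]
    rw [lt_inv_mul_iff₀ hw0]
    exact hkey
  · rw [smul_inv_smul₀ hw0.ne']

lemma unit_neg_grad {g : E} (hg : g ≠ 0) : ‖-(‖g‖⁻¹) • g‖ = 1 := by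
  have h : 0 < ‖g‖ := norm_pos_iff.2 hg
  rw [norm_smul, Real.norm_eq_abs, abs_neg, abs_inv, abs_of_pos h, inv_mul_cancel₀ h.ne']

variable [CompleteSpace E]

lemma grad_apply (f : E → ℝ) (x u : E) : ⟪gradient f x, u⟫ = fderiv ℝ f x u := by
  rw [gradient]; exact InnerProductSpace.toDual_symm_apply

lemma segment_decrease {f : E → ℝ} (hf : Differentiable ℝ f) (x u : E) {t c : ℝ}
    (ht : 0 < t) (h : ∀ s ∈ Set.Icc (0:ℝ) t, ⟪gradient f (x + s • u), u⟫ ≤ -c) :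
    f (x + t • u) ≤ f x - c * t := by
  set g : ℝ → ℝ := fun s => f (x + s • u) + c * s with hgdef
  have hg : ∀ s : ℝ, HasDerivAt g (⟪gradient f (x + s • u), u⟫ + c) s := by
    intro s
    have hline : HasDerivAt (fun s : ℝ => x + s • u) u s := by
      simpa using ((hasDerivAt_id s).smul_const u).const_add x
    have h1 : HasDerivAt (fun s : ℝ => f (x + s • u)) (fderiv ℝ f (x + s • u) u) s :=
      (hf _).hasFDerivAt.comp_hasDerivAt s hline
    have h2 : HasDerivAt (fun s : ℝ => c * s) c s := by
      simpa using (hasDerivAt_id s).const_mul c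
    rw [grad_apply]
    exact h1.add h2
  have hanti : AntitoneOn g (Set.Icc 0 t) := by
    refine antitoneOn_of_deriv_nonpos (convex_Icc 0 t)
      (fun s _ => (hg s).continuousAt.continuousWithinAt)
      (fun s _ => ((hg s).differentiableAt).differentiableWithinAt) ?_
    intro s hsmem
    rw [(hg s).deriv]
    rw [interior_Icc] at hsmem
    have := h s ⟨hsmem.1.le, hsmem.2.le⟩
    linarith
  have := hanti (Set.left_mem_Icc.2 ht.le) (Set.right_mem_Icc.2 ht.le) ht.le
  simp only [hgdef] at this
  simp only [zero_smul, add_zero, mul_zero] at this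
  linarith

end Helpers

/-- Lemma 2.6 with Remark 2.7: a first-order decrease estimate in a cone of
directions around ν = -∇φ(x₀)/|∇φ(x₀)| produces an interior cone (of opening
parameter tan(π/2 - θ)) contained in the strict sublevel set; moreover, for a
C¹ function with uniformly continuous gradient bounded below in norm, for
every α > 0 there is a uniform height δ(α) > 0 making the cone of parameter α
work at every point. -/


theorem stmt_15 {n : ℕ} (φ : EuclideanSpace ℝ (Fin n) → ℝ)
    (x₀ : EuclideanSpace ℝ (Fin n)) (hdiff : DifferentiableAt ℝ φ x₀)
    (hg : gradient φ x₀ ≠ 0)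
    (θ : ℝ) (hθ : θ ∈ Set.Ioo 0 (Real.pi / 2))
    (ν : EuclideanSpace ℝ (Fin n))
    (hν : ν = -(‖gradient φ x₀‖⁻¹) • gradient φ x₀)
    (ε : ℝ → ℝ)
    (hε : Filter.Tendsto (fun t => ε t / t) (nhdsWithin 0 (Set.Ioi 0)) (nhds 0))
    (hest : ∀ (u : EuclideanSpace ℝ (Fin n)) (t : ℝ), ‖u‖ = 1 →
      Real.cos θ < ⟪u, ν⟫ → 0 < t →
      φ (x₀ + t • u) ≤ φ x₀ - ‖gradient φ x₀‖ * t * Real.cos θ + ε t) :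
    (∃ δ > 0, ∀ z ∈ Metric.ball x₀ δ,
      Real.tan (Real.pi / 2 - θ) * ‖(z - x₀) - ⟪z - x₀, ν⟫ • ν‖ < ⟪z - x₀, ν⟫ →
      φ z < φ x₀) ∧
    ((ContDiff ℝ 1 φ ∧ UniformContinuous (gradient φ) ∧
        ∃ b₁ > (0 : ℝ), ∀ x, b₁ ≤ ‖gradient φ x‖) →
      ∀ α > (0 : ℝ), ∃ δ > (0 : ℝ), ∀ x₁ z : EuclideanSpace ℝ (Fin n),
        z ∈ Metric.ball x₁ δ →
        α * ‖(z - x₁) - ⟪z - x₁, -(‖gradient φ x₁‖⁻¹) • gradient φ x₁⟫ •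
            (-(‖gradient φ x₁‖⁻¹) • gradient φ x₁)‖ <
          ⟪z - x₁, -(‖gradient φ x₁‖⁻¹) • gradient φ x₁⟫ →
        φ z < φ x₁) := by
  obtain ⟨hθ0, hθ2⟩ := hθ
  have hsin : 0 < Real.sin θ := Real.sin_pos_of_pos_of_lt_pi hθ0 (by linarith [Real.pi_pos])
  have hcos : 0 < Real.cos θ := Real.cos_pos_of_mem_Ioo ⟨by linarith [Real.pi_pos], hθ2⟩
  constructor
  · -- Part 1
    set α := Real.tan (Real.pi / 2 - θ) with hαdef
    have hα_eq : α = Real.cos θ / Real.sin θ := by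
      rw [hαdef, Real.tan_pi_div_two_sub, Real.tan_eq_sin_div_cos, inv_div]
    have hα : 0 < α := by rw [hα_eq]; positivity
    have hκ : α / Real.sqrt (1 + α ^ 2) = Real.cos θ := by
      have h1 : 1 + α ^ 2 = ((Real.sin θ)⁻¹) ^ 2 := by
        rw [hα_eq]
        have hpyt := Real.sin_sq_add_cos_sq θ
        field_simp
        exact hpyt
      rw [h1, Real.sqrt_sq (by positivity), hα_eq]
      field_simp
    have hνu : ‖ν‖ = 1 := by rw [hν]; exact unit_neg_grad hg
    have hgn : 0 < ‖gradient φ x₀‖ := norm_pos_iff.2 hg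
    have hc : 0 < ‖gradient φ x₀‖ * Real.cos θ := by positivity
    have hev : ∀ᶠ t in nhdsWithin 0 (Set.Ioi 0),
        ε t / t < ‖gradient φ x₀‖ * Real.cos θ := hε.eventually_lt_const hc
    rw [Filter.eventually_iff, Metric.mem_nhdsWithin_iff] at hev
    obtain ⟨δ, hδ, hball⟩ := hev
    refine ⟨δ, hδ, ?_⟩
    intro z hz hcone
    obtain ⟨hw0, hu1, hinner, hweq⟩ := cone_dir hνu hα hcone
    set w := z - x₀ with hwdef
    set t := ‖w‖ with htdef
    set u := t⁻¹ • w with hudef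
    rw [hκ] at hinner
    have ht : 0 < t := hw0
    have htδ : t < δ := by
      rw [htdef, hwdef, ← dist_eq_norm]
      exact Metric.mem_ball.1 hz
    have hεt : ε t / t < ‖gradient φ x₀‖ * Real.cos θ := by
      refine hball ⟨?_, ht⟩
      rw [Metric.mem_ball, Real.dist_eq, sub_zero, abs_of_pos ht]; exact htδ
    have hεt' : ε t < ‖gradient φ x₀‖ * Real.cos θ * t := by
      rw [div_lt_iff₀ ht] at hεt; linarith
    have hest' := hest u t hu1 hinner ht
    have hz_eq : x₀ + t • u = z := by
      rw [hudef, htdef, ← hweq, hwdef]; abel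
    rw [hz_eq] at hest'
    nlinarith
  · -- Part 2
    rintro ⟨hC1, hUC, b₁, hb₁, hlb⟩ α hα
    have hdφ : Differentiable ℝ φ := hC1.differentiable one_ne_zero
    set κ := α / Real.sqrt (1 + α ^ 2) with hκdef
    have hκ0 : 0 < κ := by
      have : 0 < Real.sqrt (1 + α ^ 2) := Real.sqrt_pos.2 (by positivity)
      positivity
    set c₀ := b₁ * κ with hc₀def
    have hc₀ : 0 < c₀ := by positivity
    obtain ⟨δ, hδ, hUC'⟩ := Metric.uniformContinuous_iff.1 hUC (c₀ / 2) (by positivity)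
    refine ⟨δ, hδ, ?_⟩
    intro x₁ z hz hcone
    have hg₁ : gradient φ x₁ ≠ 0 := by
      intro h0
      have := hlb x₁
      rw [h0, norm_zero] at this
      linarith
    have hgn₁ : 0 < ‖gradient φ x₁‖ := norm_pos_iff.2 hg₁
    have hν₁u : ‖-(‖gradient φ x₁‖⁻¹) • gradient φ x₁‖ = 1 := unit_neg_grad hg₁
    obtain ⟨hw0, hu1, hinner, hweq⟩ := cone_dir hν₁u hα hcone
    set ν₁ := -(‖gradient φ x₁‖⁻¹) • gradient φ x₁ with hν₁def
    set w := z - x₁ with hwdef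
    set t := ‖w‖ with htdef
    set u := t⁻¹ • w with hudef
    have ht : 0 < t := hw0
    have htδ : t < δ := by
      rw [htdef, hwdef, ← dist_eq_norm]
      exact Metric.mem_ball.1 hz
    -- inner product of gradient at x₁ with u
    have hgrad_inner : ⟪gradient φ x₁, u⟫ < -c₀ := by
      have h1 : ⟪ν₁, u⟫ = -(‖gradient φ x₁‖⁻¹) * ⟪gradient φ x₁, u⟫ := by
        rw [hν₁def, real_inner_smul_left]
      have h2 : κ < ⟪u, ν₁⟫ := hinner
      rw [real_inner_comm, h1] at h2
      have h2' : ‖gradient φ x₁‖⁻¹ * ⟪gradient φ x₁, u⟫ < -κ := by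
        rw [neg_mul] at h2; linarith
      have h3' := (inv_mul_lt_iff₀ hgn₁).1 h2'
      have h3 : ‖gradient φ x₁‖ * κ < -⟪gradient φ x₁, u⟫ := by nlinarith [h3']
      have h4 : c₀ ≤ ‖gradient φ x₁‖ * κ :=
        mul_le_mul_of_nonneg_right (hlb x₁) hκ0.le
      linarith
    have hdirs : ∀ s ∈ Set.Icc (0:ℝ) t, ⟪gradient φ (x₁ + s • u), u⟫ ≤ -(c₀ / 2) := by
      intro s hs
      have hdist : dist (x₁ + s • u) x₁ < δ := by
        rw [dist_eq_norm, add_sub_cancel_left, norm_smul, Real.norm_eq_abs,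
          abs_of_nonneg hs.1, hu1, mul_one]
        linarith [hs.2]
      have hnear := hUC' hdist
      have hCS : ⟪gradient φ (x₁ + s • u) - gradient φ x₁, u⟫ ≤
          ‖gradient φ (x₁ + s • u) - gradient φ x₁‖ := by
        calc ⟪gradient φ (x₁ + s • u) - gradient φ x₁, u⟫
            ≤ ‖gradient φ (x₁ + s • u) - gradient φ x₁‖ * ‖u‖ := real_inner_le_norm _ _
        _ = ‖gradient φ (x₁ + s • u) - gradient φ x₁‖ := by rw [hu1, mul_one]
      rw [dist_eq_norm] at hnear
      have hsplit : ⟪gradient φ (x₁ + s • u), u⟫ =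
          ⟪gradient φ x₁, u⟫ + ⟪gradient φ (x₁ + s • u) - gradient φ x₁, u⟫ := by
        rw [inner_sub_left]; ring
      rw [hsplit]
      linarith
    have hdec := segment_decrease hdφ x₁ u ht hdirs
    have hz_eq : x₁ + t • u = z := by
      rw [hudef, htdef, ← hweq, hwdef]; abel
    rw [hz_eq] at hdec
    have hpos : 0 < c₀ / 2 * t := by positivity
    linarith
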